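/- For every l ≥ 1, the multiple zeta value ζ({2,1}^l) equals ζ({3}^l); that is, ∑_{n_1>m_1>n_2>m_2>⋯>n_l>m_l≥1} 1/(n_1²m_1 n_2²m_2 ⋯ n_l²m_l) = ∑_{n_1>n_2>⋯>n_l≥1} 1/(n_1³n_2³⋯n_l³). -/

import Mathlib

open scoped BigOperators

/-- ζ({3}^l) = ∑_{n_1 > n_2 > ⋯ > n_l ≥ 1} 1/(n_1³ ⋯ n_l³). -/
noncomputable def zetaThreeRep (l : ℕ) : ℝ :=
  ∑' f : {f : Fin l → ℕ // StrictAnti f ∧ ∀ i, 1 ≤ f i},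
    ∏ i : Fin l, (1 : ℝ) / (f.1 i : ℝ) ^ 3

/-- ζ({2,1}^l) = ∑_{n_1 > m_1 > n_2 > m_2 > ⋯ > n_l > m_l ≥ 1} 1/(n_1²m_1 ⋯ n_l²m_l). -/
noncomputable def zetaTwoOneRep (l : ℕ) : ℝ :=
  ∑' p : {p : (Fin l → ℕ) × (Fin l → ℕ) //
      (∀ i, p.2 i < p.1 i) ∧ (∀ i j, i < j → p.1 j < p.2 i) ∧ ∀ i, 1 ≤ p.2 i},
    ∏ i : Fin l, (1 : ℝ) / ((p.1.1 i : ℝ) ^ 2 * (p.1.2 i : ℝ))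

open MeasureTheory Set
open scoped ENNReal NNReal

namespace ZD



noncomputable def Dop (a : ℕ → ℝ≥0∞) : ℕ → ℝ≥0∞ := fun n => a n / n
noncomputable def Yop (a : ℕ → ℝ≥0∞) : ℕ → ℝ≥0∞ :=
  fun n => (∑ k ∈ Finset.range n, a k) / n

noncomputable def coeff : List Bool → ℕ → ℝ≥0∞
  | [] => fun n => if n = 0 then 1 else 0
  | false :: w => Dop (coeff w)
  | true :: w => Yop (coeff w)

def w3 : ℕ → List Bool
  | 0 => []
  | l + 1 => false :: false :: true :: w3 l

def w21 : ℕ → List Bool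
  | 0 => []
  | l + 1 => false :: true :: true :: w21 l

def T3 (l : ℕ) (m : ℝ≥0∞) : Type :=
  {f : Fin l → ℕ // StrictAnti f ∧ (∀ i, 1 ≤ f i) ∧ ∀ i, (f i : ℝ≥0∞) < m}

noncomputable def Z3 (l : ℕ) (m : ℝ≥0∞) : ℝ≥0∞ :=
  ∑' f : T3 l m, ∏ i, ((f.1 i : ℝ≥0∞))⁻¹ ^ 3

instance uniqueT3 (m : ℝ≥0∞) : Unique (T3 0 m) where
  default := ⟨fun i => i.elim0, fun a => a.elim0, fun i => i.elim0, fun i => i.elim0⟩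
  uniq := by rintro ⟨f, hf⟩; exact Subtype.ext (funext fun i => i.elim0)

lemma strictAnti_cons {l : ℕ} {k : ℕ} {g : Fin l → ℕ} (hg : StrictAnti g)
    (hk : ∀ i, g i < k) : StrictAnti (Fin.cons k g : Fin (l+1) → ℕ) := by
  intro i j hij
  rcases Fin.eq_zero_or_eq_succ j with rfl | ⟨j', rfl⟩
  · exact absurd hij (by simp)
  · rcases Fin.eq_zero_or_eq_succ i with rfl | ⟨i', rfl⟩
    · simpa using hk j'
    · have h' : i' < j' := by rwa [Fin.succ_lt_succ_iff] at hij
      simpa using hg h'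

def split3 (l : ℕ) (m : ℝ≥0∞) :
    T3 (l+1) m ≃ Σ k : {k : ℕ // 1 ≤ k ∧ (k : ℝ≥0∞) < m}, T3 l (k : ℕ) where
  toFun f := ⟨⟨f.1 0, f.2.2.1 0, f.2.2.2 0⟩,
    ⟨f.1 ∘ Fin.succ, f.2.1.comp_strictMono (Fin.strictMono_succ),
      fun i => f.2.2.1 _,
      fun i => by exact_mod_cast f.2.1 (Fin.succ_pos i)⟩⟩
  invFun q := ⟨Fin.cons q.1.1 q.2.1,
    strictAnti_cons q.2.2.1 (fun i => by exact_mod_cast q.2.2.2.2 i),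
    fun i => by
      rcases Fin.eq_zero_or_eq_succ i with rfl | ⟨i', rfl⟩
      · simpa using q.1.2.1
      · simpa using q.2.2.2.1 i',
    fun i => by
      rcases Fin.eq_zero_or_eq_succ i with rfl | ⟨i', rfl⟩
      · simpa using q.1.2.2
      · simp only [Fin.cons_succ]
        exact lt_trans (q.2.2.2.2 i') q.1.2.2⟩
  left_inv f := Subtype.ext (Fin.cons_self_tail f.1)
  right_inv q := by
    refine Sigma.ext (Subtype.ext rfl) ?_
    exact heq_of_eq (Subtype.ext (funext fun i => by simp [Fin.tail]))

lemma Zsplit3 (l : ℕ) (m : ℝ≥0∞) :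
    Z3 (l+1) m
      = ∑' k : {k : ℕ // 1 ≤ k ∧ (k : ℝ≥0∞) < m}, ((k.1 : ℝ≥0∞))⁻¹ ^ 3 * Z3 l (k.1 : ℝ≥0∞) := by
  have h1 : Z3 (l+1) m = ∑' q : Σ k : {k : ℕ // 1 ≤ k ∧ (k : ℝ≥0∞) < m}, T3 l (k : ℕ),
      (∏ i, ((((split3 l m).symm q).1 i : ℝ≥0∞))⁻¹ ^ 3) := ((split3 l m).symm.tsum_eq _).symm
  rw [h1, ENNReal.tsum_sigma']
  refine tsum_congr fun k => ?_
  rw [Z3, ← ENNReal.tsum_mul_left]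
  refine tsum_congr fun g => ?_
  have hs : ((split3 l m).symm ⟨k, g⟩).1 = Fin.cons k.1 g.1 := rfl
  rw [hs, Fin.prod_univ_succ]
  simp [Fin.cons_succ]

lemma Z3_zero (m : ℝ≥0∞) : Z3 0 m = 1 := by
  rw [Z3, tsum_eq_single default (fun b hb => absurd (Unique.eq_default b) hb)]
  simp

lemma C3 : ∀ l m : ℕ, (l = 0 → 1 ≤ m) →
    (∑ k ∈ Finset.range m, coeff (w3 l) k) = Z3 l (m : ℝ≥0∞) := by
  intro l
  induction l with
  | zero =>
    intro m hm
    rw [Z3_zero]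
    show (∑ k ∈ Finset.range m, if k = 0 then (1:ℝ≥0∞) else 0) = 1
    rw [Finset.sum_ite_eq' (Finset.range m) 0 (fun _ => (1:ℝ≥0∞))]
    rw [if_pos (Finset.mem_range.mpr (by omega))]
  | succ l ih =>
    intro m _
    rw [Zsplit3 l (m : ℝ≥0∞)]
    have h2 : (∑' k : {k : ℕ // 1 ≤ k ∧ (k:ℝ≥0∞) < (m:ℝ≥0∞)},
          ((k.1:ℝ≥0∞))⁻¹ ^ 3 * Z3 l (k.1:ℝ≥0∞))
        = ∑' n : ℕ, Set.indicator {k : ℕ | 1 ≤ k ∧ (k:ℝ≥0∞) < (m:ℝ≥0∞)}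
            (fun n => ((n:ℝ≥0∞))⁻¹ ^ 3 * Z3 l (n:ℝ≥0∞)) n :=
      tsum_subtype {k : ℕ | 1 ≤ k ∧ (k:ℝ≥0∞) < (m:ℝ≥0∞)} (fun n => ((n:ℝ≥0∞))⁻¹ ^ 3 * Z3 l (n:ℝ≥0∞))
    rw [h2, tsum_eq_sum (s := Finset.range m) (fun k hk => by
      apply Set.indicator_of_notMem
      intro hmem
      exact hk (Finset.mem_range.mpr (Nat.cast_lt.mp hmem.2)))]
    refine (Finset.sum_congr rfl fun k hk => ?_)
    rcases Nat.eq_zero_or_pos k with rfl | hk1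
    · have : (0:ℕ) ∉ {k : ℕ | 1 ≤ k ∧ (k:ℝ≥0∞) < (m:ℝ≥0∞)} := by simp
      rw [Set.indicator_of_notMem this]
      show Dop (Dop (Yop (coeff (w3 l)))) 0 = 0
      simp [Dop, Yop]
    · have hmem : k ∈ {k : ℕ | 1 ≤ k ∧ (k:ℝ≥0∞) < (m:ℝ≥0∞)} :=
        ⟨hk1, Nat.cast_lt.mpr (Finset.mem_range.mp hk)⟩
      rw [Set.indicator_of_mem hmem]
      rw [← ih k (fun _ => hk1)]
      show Dop (Dop (Yop (coeff (w3 l)))) k = _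
      simp only [Dop, Yop, div_eq_mul_inv]
      ring

lemma sumA (l : ℕ) : (∑' k : ℕ, coeff (w3 (l+1)) k) = Z3 (l+1) ⊤ := by
  rw [Zsplit3 l ⊤]
  have h2 : (∑' k : {k : ℕ // 1 ≤ k ∧ (k:ℝ≥0∞) < ⊤},
        ((k.1:ℝ≥0∞))⁻¹ ^ 3 * Z3 l (k.1:ℝ≥0∞))
      = ∑' n : ℕ, Set.indicator {k : ℕ | 1 ≤ k ∧ (k:ℝ≥0∞) < ⊤}
          (fun n => ((n:ℝ≥0∞))⁻¹ ^ 3 * Z3 l (n:ℝ≥0∞)) n :=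
    tsum_subtype {k : ℕ | 1 ≤ k ∧ (k:ℝ≥0∞) < ⊤} (fun n => ((n:ℝ≥0∞))⁻¹ ^ 3 * Z3 l (n:ℝ≥0∞))
  rw [h2]
  refine tsum_congr fun k => ?_
  rcases Nat.eq_zero_or_pos k with rfl | hk1
  · have : (0:ℕ) ∉ {k : ℕ | 1 ≤ k ∧ (k:ℝ≥0∞) < ⊤} := by simp
    rw [Set.indicator_of_notMem this]
    show Dop (Dop (Yop (coeff (w3 l)))) 0 = 0
    simp [Dop, Yop]
  · have hmem : k ∈ {k : ℕ | 1 ≤ k ∧ (k:ℝ≥0∞) < ⊤} := ⟨hk1, ENNReal.natCast_lt_top k⟩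
    rw [Set.indicator_of_mem hmem, ← C3 l k (fun _ => hk1)]
    show Dop (Dop (Yop (coeff (w3 l)))) k = _
    simp only [Dop, Yop, div_eq_mul_inv]
    ring










def T21 (l : ℕ) (m : ℝ≥0∞) : Type :=
  {p : (Fin l → ℕ) × (Fin l → ℕ) //
    (∀ i, p.2 i < p.1 i) ∧ (∀ i j, i < j → p.1 j < p.2 i) ∧ (∀ i, 1 ≤ p.2 i) ∧
      ∀ i, (p.1 i : ℝ≥0∞) < m}

noncomputable def Z21 (l : ℕ) (m : ℝ≥0∞) : ℝ≥0∞ :=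
  ∑' p : T21 l m, ∏ i, (((p.1.1 i : ℝ≥0∞)) ^ 2 * (p.1.2 i : ℝ≥0∞))⁻¹

instance uniqueT21 (m : ℝ≥0∞) : Unique (T21 0 m) where
  default := ⟨(fun i => i.elim0, fun i => i.elim0), fun i => i.elim0,
    fun i _ _ => i.elim0, fun i => i.elim0, fun i => i.elim0⟩
  uniq := by
    rintro ⟨⟨f, g⟩, h⟩
    exact Subtype.ext (Prod.ext (funext fun i => i.elim0) (funext fun i => i.elim0))

lemma Z21_zero (m : ℝ≥0∞) : Z21 0 m = 1 := by
  rw [Z21, tsum_eq_single default (fun b hb => absurd (Unique.eq_default b) hb)]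
  simp

def split21 (l : ℕ) (m : ℝ≥0∞) :
    T21 (l+1) m ≃ Σ q : {q : ℕ × ℕ // q.2 < q.1 ∧ 1 ≤ q.2 ∧ (q.1 : ℝ≥0∞) < m},
      T21 l (q.1.2 : ℝ≥0∞) where
  toFun p := ⟨⟨(p.1.1 0, p.1.2 0), p.2.1 0, p.2.2.2.1 0, p.2.2.2.2 0⟩,
    ⟨(p.1.1 ∘ Fin.succ, p.1.2 ∘ Fin.succ),
      fun i => p.2.1 i.succ,
      fun i j hij => p.2.2.1 i.succ j.succ (Fin.succ_lt_succ_iff.mpr hij),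
      fun i => p.2.2.2.1 i.succ,
      fun i => by exact_mod_cast p.2.2.1 0 i.succ (Fin.succ_pos i)⟩⟩
  invFun q := ⟨(Fin.cons q.1.1.1 q.2.1.1, Fin.cons q.1.1.2 q.2.1.2),
    fun i => by
      rcases Fin.eq_zero_or_eq_succ i with rfl | ⟨i', rfl⟩
      · simpa using q.1.2.1
      · simpa using q.2.2.1 i',
    fun i j hij => by
      rcases Fin.eq_zero_or_eq_succ j with rfl | ⟨j', rfl⟩
      · exact absurd hij (by simp)
      · rcases Fin.eq_zero_or_eq_succ i with rfl | ⟨i', rfl⟩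
        · simp only [Fin.cons_succ, Fin.cons_zero]
          exact Nat.cast_lt.mp (q.2.2.2.2.2 j')
        · simp only [Fin.cons_succ]
          exact q.2.2.2.1 i' j' (by rwa [Fin.succ_lt_succ_iff] at hij),
    fun i => by
      rcases Fin.eq_zero_or_eq_succ i with rfl | ⟨i', rfl⟩
      · simpa using q.1.2.2.1
      · simpa using q.2.2.2.2.1 i',
    fun i => by
      rcases Fin.eq_zero_or_eq_succ i with rfl | ⟨i', rfl⟩
      · simpa using q.1.2.2.2
      · simp only [Fin.cons_succ]
        exact lt_trans (q.2.2.2.2.2 i') (lt_trans (Nat.cast_lt.mpr q.1.2.1) q.1.2.2.2)⟩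
  left_inv p := Subtype.ext (Prod.ext (Fin.cons_self_tail p.1.1) (Fin.cons_self_tail p.1.2))
  right_inv q := by
    refine Sigma.ext (Subtype.ext rfl) ?_
    exact heq_of_eq (Subtype.ext (Prod.ext
      (funext fun i => by simp [Function.comp]) (funext fun i => by simp [Function.comp])))

lemma Zsplit21 (l : ℕ) (m : ℝ≥0∞) :
    Z21 (l+1) m
      = ∑' q : {q : ℕ × ℕ // q.2 < q.1 ∧ 1 ≤ q.2 ∧ (q.1 : ℝ≥0∞) < m},
          (((q.1.1 : ℝ≥0∞)) ^ 2 * (q.1.2 : ℝ≥0∞))⁻¹ * Z21 l (q.1.2 : ℝ≥0∞) := by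
  have h1 : Z21 (l+1) m = ∑' q : Σ q : {q : ℕ × ℕ // q.2 < q.1 ∧ 1 ≤ q.2 ∧ (q.1 : ℝ≥0∞) < m},
        T21 l (q.1.2 : ℝ≥0∞),
      ∏ i, (((((split21 l m).symm q).1.1 i : ℝ≥0∞)) ^ 2
            * (((split21 l m).symm q).1.2 i : ℝ≥0∞))⁻¹ :=
    ((split21 l m).symm.tsum_eq _).symm
  rw [h1, ENNReal.tsum_sigma']
  refine tsum_congr fun q => ?_
  rw [Z21, ← ENNReal.tsum_mul_left]
  refine tsum_congr fun g => ?_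
  have hs1 : ((split21 l m).symm ⟨q, g⟩).1.1 = Fin.cons q.1.1 g.1.1 := rfl
  have hs2 : ((split21 l m).symm ⟨q, g⟩).1.2 = Fin.cons q.1.2 g.1.2 := rfl
  rw [hs1, hs2, Fin.prod_univ_succ]
  simp [Fin.cons_succ]

lemma coeff21_eval (l k : ℕ) (μ : ℝ≥0∞) (hkμ : (k : ℝ≥0∞) < μ)
    (ih : ∀ j : ℕ, (l = 0 → 1 ≤ j) →
      (∑ n ∈ Finset.range j, coeff (w21 l) n) = Z21 l (j : ℝ≥0∞)) :
    coeff (w21 (l+1)) k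
      = ∑ j ∈ Finset.range k,
          Set.indicator {q : ℕ × ℕ | q.2 < q.1 ∧ 1 ≤ q.2 ∧ (q.1 : ℝ≥0∞) < μ}
            (fun q => (((q.1 : ℝ≥0∞)) ^ 2 * (q.2 : ℝ≥0∞))⁻¹ * Z21 l (q.2 : ℝ≥0∞)) (k, j) := by
  have h0 : coeff (w21 (l+1)) k
      = (∑ j ∈ Finset.range k, Yop (coeff (w21 l)) j) / k / k := rfl
  rw [h0, div_eq_mul_inv, div_eq_mul_inv, Finset.sum_mul, Finset.sum_mul]
  refine Finset.sum_congr rfl fun j hj => ?_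
  have hjk : j < k := Finset.mem_range.mp hj
  rcases Nat.eq_zero_or_pos j with rfl | hj1
  · have hnm : ((k, 0) : ℕ × ℕ) ∉ {q : ℕ × ℕ | q.2 < q.1 ∧ 1 ≤ q.2 ∧ (q.1 : ℝ≥0∞) < μ} := by
      simp
    rw [Set.indicator_of_notMem hnm]
    simp [Yop]
  · have hm : ((k, j) : ℕ × ℕ) ∈ {q : ℕ × ℕ | q.2 < q.1 ∧ 1 ≤ q.2 ∧ (q.1 : ℝ≥0∞) < μ} :=
      ⟨hjk, hj1, hkμ⟩
    rw [Set.indicator_of_mem hm]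
    have h1 : Yop (coeff (w21 l)) j = Z21 l (j : ℝ≥0∞) / j := by
      rw [Yop, ih j (fun _ => hj1)]
    rw [h1, pow_two,
      ENNReal.mul_inv (Or.inr (ENNReal.natCast_ne_top j)) (Or.inl (by
        exact ENNReal.mul_ne_top (ENNReal.natCast_ne_top k) (ENNReal.natCast_ne_top k))),
      ENNReal.mul_inv (Or.inr (ENNReal.natCast_ne_top k)) (Or.inl (ENNReal.natCast_ne_top k))]
    simp only [div_eq_mul_inv]
    ring

lemma C21 : ∀ l m : ℕ, (l = 0 → 1 ≤ m) →
    (∑ k ∈ Finset.range m, coeff (w21 l) k) = Z21 l (m : ℝ≥0∞) := by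
  intro l
  induction l with
  | zero =>
    intro m hm
    rw [Z21_zero]
    show (∑ k ∈ Finset.range m, if k = 0 then (1:ℝ≥0∞) else 0) = 1
    rw [Finset.sum_ite_eq' (Finset.range m) 0 (fun _ => (1:ℝ≥0∞))]
    rw [if_pos (Finset.mem_range.mpr (by omega))]
  | succ l ih =>
    intro m _
    rw [Zsplit21 l (m : ℝ≥0∞)]
    have h2 : (∑' q : {q : ℕ × ℕ // q.2 < q.1 ∧ 1 ≤ q.2 ∧ (q.1 : ℝ≥0∞) < (m:ℝ≥0∞)},
          (((q.1.1 : ℝ≥0∞)) ^ 2 * (q.1.2 : ℝ≥0∞))⁻¹ * Z21 l (q.1.2 : ℝ≥0∞))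
        = ∑' q : ℕ × ℕ, Set.indicator {q : ℕ × ℕ | q.2 < q.1 ∧ 1 ≤ q.2 ∧ (q.1 : ℝ≥0∞) < (m:ℝ≥0∞)}
            (fun q => (((q.1 : ℝ≥0∞)) ^ 2 * (q.2 : ℝ≥0∞))⁻¹ * Z21 l (q.2 : ℝ≥0∞)) q :=
      tsum_subtype {q : ℕ × ℕ | q.2 < q.1 ∧ 1 ≤ q.2 ∧ (q.1 : ℝ≥0∞) < (m:ℝ≥0∞)}
        (fun q => (((q.1 : ℝ≥0∞)) ^ 2 * (q.2 : ℝ≥0∞))⁻¹ * Z21 l (q.2 : ℝ≥0∞))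
    rw [h2, ENNReal.tsum_prod']
    rw [tsum_eq_sum (s := Finset.range m) (fun k hk => by
      refine ENNReal.tsum_eq_zero.mpr fun j => ?_
      refine Set.indicator_of_notMem (fun hmem => ?_) _
      exact hk (Finset.mem_range.mpr (Nat.cast_lt.mp hmem.2.2)))]
    refine Finset.sum_congr rfl fun k hk => ?_
    rw [tsum_eq_sum (s := Finset.range k) (fun j hj => by
      refine Set.indicator_of_notMem (fun hmem => ?_) _
      exact hj (Finset.mem_range.mpr hmem.1))]
    exact coeff21_eval l k (m:ℝ≥0∞) (Nat.cast_lt.mpr (Finset.mem_range.mp hk)) ih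

lemma sumB (l : ℕ) : (∑' k : ℕ, coeff (w21 (l+1)) k) = Z21 (l+1) ⊤ := by
  rw [Zsplit21 l ⊤]
  have h2 : (∑' q : {q : ℕ × ℕ // q.2 < q.1 ∧ 1 ≤ q.2 ∧ (q.1 : ℝ≥0∞) < ⊤},
        (((q.1.1 : ℝ≥0∞)) ^ 2 * (q.1.2 : ℝ≥0∞))⁻¹ * Z21 l (q.1.2 : ℝ≥0∞))
      = ∑' q : ℕ × ℕ, Set.indicator {q : ℕ × ℕ | q.2 < q.1 ∧ 1 ≤ q.2 ∧ (q.1 : ℝ≥0∞) < ⊤}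
          (fun q => (((q.1 : ℝ≥0∞)) ^ 2 * (q.2 : ℝ≥0∞))⁻¹ * Z21 l (q.2 : ℝ≥0∞)) q :=
    tsum_subtype {q : ℕ × ℕ | q.2 < q.1 ∧ 1 ≤ q.2 ∧ (q.1 : ℝ≥0∞) < ⊤}
      (fun q => (((q.1 : ℝ≥0∞)) ^ 2 * (q.2 : ℝ≥0∞))⁻¹ * Z21 l (q.2 : ℝ≥0∞))
  rw [h2, ENNReal.tsum_prod']
  refine tsum_congr fun k => ?_
  rw [tsum_eq_sum (s := Finset.range k) (fun j hj => by
    refine Set.indicator_of_notMem (fun hmem => ?_) _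
    exact hj (Finset.mem_range.mpr hmem.1))]
  exact coeff21_eval l k ⊤ (ENNReal.natCast_lt_top k) (fun j hj => C21 l j hj)



noncomputable def gfun : Bool → ℝ → ℝ≥0∞
  | false => fun t => ENNReal.ofReal t⁻¹
  | true => fun t => ENNReal.ofReal (1 - t)⁻¹

lemma gfun_measurable (c : Bool) : Measurable (gfun c) := by
  cases c
  · exact (measurable_id.inv).ennreal_ofReal
  · exact ((measurable_const.sub measurable_id).inv).ennreal_ofReal

noncomputable def It : List Bool → ℝ → ℝ → ℝ≥0∞
  | [] => fun _ _ => 1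
  | c :: w => fun a b => ∫⁻ t in Set.Ioo a b, gfun c t * It w a t

lemma It_nil (a b : ℝ) : It [] a b = 1 := rfl
lemma It_cons (c : Bool) (w : List Bool) (a b : ℝ) :
    It (c :: w) a b = ∫⁻ t in Set.Ioo a b, gfun c t * It w a t := rfl

lemma It_measurable (w : List Bool) : Measurable (fun p : ℝ × ℝ => It w p.1 p.2) := by
  induction w with
  | nil => exact measurable_const
  | cons c w ih =>
    have hS : MeasurableSet {q : (ℝ × ℝ) × ℝ | q.1.1 < q.2 ∧ q.2 < q.1.2} :=
      (measurableSet_lt (measurable_fst.comp measurable_fst) measurable_snd).inter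
        (measurableSet_lt measurable_snd (measurable_snd.comp measurable_fst))
    have hint : Measurable fun q : (ℝ × ℝ) × ℝ =>
        Set.indicator {q : (ℝ × ℝ) × ℝ | q.1.1 < q.2 ∧ q.2 < q.1.2}
          (fun q => gfun c q.2 * It w q.1.1 q.2) q :=
      (((gfun_measurable c).comp measurable_snd).mul
        (ih.comp ((measurable_fst.comp measurable_fst).prodMk measurable_snd))).indicator hS
    have h2 : Measurable fun p : ℝ × ℝ => ∫⁻ t : ℝ,
        Set.indicator {q : (ℝ × ℝ) × ℝ | q.1.1 < q.2 ∧ q.2 < q.1.2}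
          (fun q => gfun c q.2 * It w q.1.1 q.2) (p, t) := hint.lintegral_prod_right'
    have heq : (fun p : ℝ × ℝ => It (c :: w) p.1 p.2)
        = fun p : ℝ × ℝ => ∫⁻ t : ℝ, Set.indicator {q : (ℝ × ℝ) × ℝ | q.1.1 < q.2 ∧ q.2 < q.1.2}
            (fun q => gfun c q.2 * It w q.1.1 q.2) (p, t) := by
      funext p
      rw [It_cons, ← lintegral_indicator measurableSet_Ioo]
      refine lintegral_congr fun t => ?_
      by_cases ht : t ∈ Set.Ioo p.1 p.2
      · rw [Set.indicator_of_mem ht, Set.indicator_of_mem (by exact ⟨ht.1, ht.2⟩)]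
      · rw [Set.indicator_of_notMem ht, Set.indicator_of_notMem
          (by simpa [Set.mem_Ioo] using ht)]
    rw [heq]
    exact h2

lemma double_swap (F : ℝ → ℝ → ℝ≥0∞) (hF : Measurable (Function.uncurry F)) (a b : ℝ) :
    (∫⁻ t in Set.Ioo a b, ∫⁻ s in Set.Ioo a t, F s t)
      = ∫⁻ s in Set.Ioo a b, ∫⁻ t in Set.Ioo s b, F s t := by
  have hS : MeasurableSet {q : ℝ × ℝ | a < q.1 ∧ q.1 < q.2 ∧ q.2 < b} :=
    (measurableSet_lt measurable_const measurable_fst).inter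
      ((measurableSet_lt measurable_fst measurable_snd).inter
        (measurableSet_lt measurable_snd measurable_const))
  have hG : Measurable (Set.indicator {q : ℝ × ℝ | a < q.1 ∧ q.1 < q.2 ∧ q.2 < b}
      (Function.uncurry F)) := hF.indicator hS
  have h1 : (∫⁻ t in Set.Ioo a b, ∫⁻ s in Set.Ioo a t, F s t)
      = ∫⁻ t : ℝ, ∫⁻ s : ℝ, Set.indicator {q : ℝ × ℝ | a < q.1 ∧ q.1 < q.2 ∧ q.2 < b}
          (Function.uncurry F) (s, t) := by
    rw [← lintegral_indicator measurableSet_Ioo]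
    refine lintegral_congr fun t => ?_
    by_cases ht : t ∈ Set.Ioo a b
    · rw [Set.indicator_of_mem ht, ← lintegral_indicator measurableSet_Ioo]
      refine lintegral_congr fun s => ?_
      simp only [Set.indicator_apply, Set.mem_Ioo, Set.mem_setOf_eq, Function.uncurry]
      have htb := ht.2
      split_ifs <;> tauto
    · rw [Set.indicator_of_notMem ht]
      symm
      have hz : ∀ s : ℝ, Set.indicator {q : ℝ × ℝ | a < q.1 ∧ q.1 < q.2 ∧ q.2 < b}
          (Function.uncurry F) (s, t) = 0 := fun s => by
        refine Set.indicator_of_notMem (fun hmem => ?_) _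
        exact ht ⟨lt_trans hmem.1 hmem.2.1, hmem.2.2⟩
      rw [lintegral_congr hz, lintegral_zero]
  have h3 : (∫⁻ s in Set.Ioo a b, ∫⁻ t in Set.Ioo s b, F s t)
      = ∫⁻ s : ℝ, ∫⁻ t : ℝ, Set.indicator {q : ℝ × ℝ | a < q.1 ∧ q.1 < q.2 ∧ q.2 < b}
          (Function.uncurry F) (s, t) := by
    rw [← lintegral_indicator measurableSet_Ioo]
    refine lintegral_congr fun s => ?_
    by_cases hs : s ∈ Set.Ioo a b
    · rw [Set.indicator_of_mem hs, ← lintegral_indicator measurableSet_Ioo]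
      refine lintegral_congr fun t => ?_
      simp only [Set.indicator_apply, Set.mem_Ioo, Set.mem_setOf_eq, Function.uncurry]
      have hsa := hs.1
      split_ifs <;> tauto
    · rw [Set.indicator_of_notMem hs]
      symm
      have hz : ∀ t : ℝ, Set.indicator {q : ℝ × ℝ | a < q.1 ∧ q.1 < q.2 ∧ q.2 < b}
          (Function.uncurry F) (s, t) = 0 := fun t => by
        refine Set.indicator_of_notMem (fun hmem => ?_) _
        exact hs ⟨hmem.1, lt_trans hmem.2.1 hmem.2.2⟩
      rw [lintegral_congr hz, lintegral_zero]
  rw [h1, h3]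
  exact lintegral_lintegral_swap ((hG.comp measurable_swap).aemeasurable)

lemma It_rev (c : Bool) : ∀ (w : List Bool) (a b : ℝ),
    It (w ++ [c]) a b = ∫⁻ s in Set.Ioo a b, gfun c s * It w s b := by
  intro w
  induction w with
  | nil =>
    intro a b
    simp only [List.nil_append, It_cons, It_nil]
  | cons c1 w ih =>
    intro a b
    have hmeas : ∀ t : ℝ, Measurable fun s : ℝ => gfun c s * It w s t := fun t =>
      (gfun_measurable c).mul ((It_measurable w).comp (measurable_id.prodMk measurable_const))
    calc It ((c1 :: w) ++ [c]) a b
        = ∫⁻ t in Set.Ioo a b, gfun c1 t * It (w ++ [c]) a t := It_cons _ _ _ _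
      _ = ∫⁻ t in Set.Ioo a b, ∫⁻ s in Set.Ioo a t, gfun c1 t * (gfun c s * It w s t) := by
          refine setLIntegral_congr_fun measurableSet_Ioo
            (fun t ht => ?_)
          rw [ih a t, ← lintegral_const_mul _ (hmeas t)]
      _ = ∫⁻ s in Set.Ioo a b, ∫⁻ t in Set.Ioo s b, gfun c1 t * (gfun c s * It w s t) := by
          refine double_swap (fun s t => gfun c1 t * (gfun c s * It w s t)) ?_ a b
          exact (((gfun_measurable c1).comp measurable_snd).mul
            (((gfun_measurable c).comp measurable_fst).mul (It_measurable w)))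
      _ = ∫⁻ s in Set.Ioo a b, gfun c s * It (c1 :: w) s b := by
          refine setLIntegral_congr_fun measurableSet_Ioo
            (fun s hs => ?_)
          have hm : Measurable fun t : ℝ => gfun c1 t * It w s t :=
            (gfun_measurable c1).mul
              ((It_measurable w).comp (measurable_const.prodMk measurable_id))
          rw [It_cons, ← lintegral_const_mul _ hm]
          refine lintegral_congr fun t => by ring

def dualWord (w : List Bool) : List Bool := (w.map not).reverse

lemma dualWord_cons (c : Bool) (w : List Bool) :
    dualWord (c :: w) = dualWord w ++ [!c] := by
  simp [dualWord]

lemma gfun_dual (c : Bool) (s : ℝ) : gfun c (1 - s) = gfun (!c) s := by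
  cases c <;> simp [gfun, sub_sub_cancel]

lemma measurePreserving_oneSub : MeasurePreserving (fun s : ℝ => 1 - s) volume volume := by
  have h1 : MeasurePreserving (fun x : ℝ => -x) volume volume :=
    Measure.measurePreserving_neg volume
  have h2 : MeasurePreserving (fun x : ℝ => 1 + x) volume volume :=
    measurePreserving_add_left volume 1
  simpa [Function.comp_def, sub_eq_add_neg] using h2.comp h1

noncomputable def oneSubEquiv : ℝ ≃ᵐ ℝ where
  toEquiv := Function.Involutive.toPerm (fun s : ℝ => 1 - s) (fun x => by ring)
  measurable_toFun := measurable_const.sub measurable_id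
  measurable_invFun := measurable_const.sub measurable_id

lemma It_dual : ∀ (w : List Bool) (u : ℝ), It w 0 u = It (dualWord w) (1 - u) 1 := by
  intro w
  induction w with
  | nil => intro u; rfl
  | cons c w ih =>
    intro u
    rw [dualWord_cons, It_rev, It_cons]
    have hcv := measurePreserving_oneSub.setLIntegral_comp_emb
      oneSubEquiv.measurableEmbedding (fun t => gfun c t * It w 0 t) (Set.Ioo (1-u) 1)
    have himg : (fun s : ℝ => 1 - s) '' Set.Ioo (1-u) 1 = Set.Ioo 0 u := by
      rw [Set.image_const_sub_Ioo]
      norm_num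
    rw [himg] at hcv
    rw [← hcv]
    refine setLIntegral_congr_fun measurableSet_Ioo
      (fun s hs => ?_)
    show gfun c (1 - s) * It w 0 (1 - s) = gfun (!c) s * It (dualWord w) s 1
    rw [gfun_dual, ih (1 - s), sub_sub_cancel]




lemma integrableOn_pow_Ioo (u : ℝ) (j : ℕ) :
    IntegrableOn (fun t : ℝ => t ^ j) (Set.Ioo 0 u) :=
  ((continuous_pow j).integrableOn_Icc).mono_set Set.Ioo_subset_Icc_self

lemma Ipow (u : ℝ) (hu0 : 0 < u) (j : ℕ) :
    (∫⁻ t in Set.Ioo 0 u, ENNReal.ofReal (t ^ j))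
      = ENNReal.ofReal u ^ (j+1) / (((j:ℝ≥0∞)) + 1) := by
  rw [← ofReal_integral_eq_lintegral_ofReal (integrableOn_pow_Ioo u j)
    ((ae_restrict_iff' measurableSet_Ioo).mpr (Filter.Eventually.of_forall
      fun t ht => pow_nonneg ht.1.le j))]
  have hval : (∫ t in Set.Ioo 0 u, t ^ j) = u ^ (j+1) / (j+1) := by
    rw [← integral_Ioc_eq_integral_Ioo, ← intervalIntegral.integral_of_le hu0.le,
      integral_pow]
    simp
  rw [hval, ENNReal.ofReal_div_of_pos (by positivity), ENNReal.ofReal_pow hu0.le]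
  congr 1
  rw [show ((j:ℝ)+1) = ((j+1 : ℕ):ℝ) by push_cast; ring, ENNReal.ofReal_natCast]
  push_cast
  ring

lemma In0 (u : ℝ) (hu0 : 0 < u) (n : ℕ) (hn : 1 ≤ n) :
    (∫⁻ t in Set.Ioo 0 u, gfun false t * ENNReal.ofReal t ^ n)
      = ENNReal.ofReal u ^ n / (n : ℝ≥0∞) := by
  obtain ⟨j, rfl⟩ : ∃ j, n = j + 1 := ⟨n - 1, by omega⟩
  have h1 : ∀ t ∈ Set.Ioo 0 u, gfun false t * ENNReal.ofReal t ^ (j+1)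
      = ENNReal.ofReal (t ^ j) := by
    intro t ht
    show ENNReal.ofReal t⁻¹ * ENNReal.ofReal t ^ (j+1) = _
    rw [← ENNReal.ofReal_pow ht.1.le, ← ENNReal.ofReal_mul (inv_nonneg.mpr ht.1.le)]
    congr 1
    rw [pow_succ, mul_comm (t^j) t, ← mul_assoc, inv_mul_cancel₀ ht.1.ne', one_mul]
  rw [setLIntegral_congr_fun measurableSet_Ioo h1,
    Ipow u hu0 j]
  push_cast
  ring_nf

lemma In1 (u : ℝ) (hu0 : 0 < u) (hu1 : u ≤ 1) (n : ℕ) :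
    (∫⁻ t in Set.Ioo 0 u, gfun true t * ENNReal.ofReal t ^ n)
      = ∑' k : ℕ, ENNReal.ofReal u ^ (n+1+k) / ((n+1+k : ℕ) : ℝ≥0∞) := by
  have h1 : ∀ t ∈ Set.Ioo 0 u, gfun true t * ENNReal.ofReal t ^ n
      = ∑' k : ℕ, ENNReal.ofReal (t ^ (n + k)) := by
    intro t ht
    have ht1 : t < 1 := lt_of_lt_of_le ht.2 hu1
    have hg : gfun true t = ∑' k : ℕ, ENNReal.ofReal t ^ k := by
      rw [ENNReal.tsum_geometric]
      show ENNReal.ofReal (1 - t)⁻¹ = _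
      rw [ENNReal.ofReal_inv_of_pos (by linarith), ENNReal.ofReal_sub 1 ht.1.le,
        ENNReal.ofReal_one]
    rw [hg, ← ENNReal.tsum_mul_right]
    refine tsum_congr fun k => ?_
    rw [← pow_add, ← ENNReal.ofReal_pow ht.1.le, add_comm]
  have hm : ∀ k : ℕ, AEMeasurable (fun t : ℝ => ENNReal.ofReal (t ^ (n+k)))
      (volume.restrict (Set.Ioo 0 u)) :=
    fun k => ((measurable_id.pow_const (n+k)).ennreal_ofReal).aemeasurable
  rw [setLIntegral_congr_fun measurableSet_Ioo h1,
    lintegral_tsum hm]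
  refine tsum_congr fun k => ?_
  rw [Ipow u hu0 (n+k)]
  congr 1
  · congr 1
    omega
  · push_cast
    ring

lemma coeff_zero : ∀ w : List Bool, w.getLast? = some true → coeff w 0 = 0 := by
  intro w
  induction w with
  | nil => intro h; simp at h
  | cons c w ih =>
    intro h
    cases w with
    | nil =>
      have : c = true := by simpa using h
      subst this
      simp [coeff, Yop]
    | cons c2 w2 =>
      have h2 : (c2 :: w2).getLast? = some true := by
        rwa [List.getLast?_cons_cons] at h
      cases c
      · show Dop (coeff (c2 :: w2)) 0 = 0
        simp [Dop, ih h2]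
      · simp [coeff, Yop]

lemma It_eq : ∀ w : List Bool, (w = [] ∨ w.getLast? = some true) → ∀ u : ℝ, u ∈ Set.Ioc 0 1 →
    It w 0 u = ∑' n : ℕ, coeff w n * ENNReal.ofReal u ^ n := by
  intro w
  induction w with
  | nil =>
    intro _ u _
    rw [It_nil, tsum_eq_single 0 (fun n hn => by simp [coeff, hn])]
    simp [coeff]
  | cons c w ih =>
    intro hok u hu
    have hw : w = [] ∨ w.getLast? = some true := by
      cases w with
      | nil => exact Or.inl rfl
      | cons c2 w2 =>
        rcases hok with h | h
        · exact absurd h (by simp)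
        · exact Or.inr (by rwa [List.getLast?_cons_cons] at h)
    have hpt : ∀ t ∈ Set.Ioo 0 u, gfun c t * It w 0 t
        = ∑' n : ℕ, coeff w n * (gfun c t * ENNReal.ofReal t ^ n) := by
      intro t ht
      rw [ih hw t ⟨ht.1, le_of_lt (lt_of_lt_of_le ht.2 hu.2)⟩, ← ENNReal.tsum_mul_left]
      refine tsum_congr fun n => by ring
    have hm : ∀ n : ℕ, Measurable fun t : ℝ => gfun c t * ENNReal.ofReal t ^ n :=
      fun n => (gfun_measurable c).mul ((measurable_id.ennreal_ofReal).pow_const n)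
    have hma : ∀ n : ℕ, AEMeasurable (fun t : ℝ => coeff w n * (gfun c t * ENNReal.ofReal t ^ n))
        (volume.restrict (Set.Ioo 0 u)) :=
      fun n => ((hm n).const_mul _).aemeasurable
    rw [It_cons, setLIntegral_congr_fun measurableSet_Ioo hpt,
      lintegral_tsum hma]
    cases c
    · have hw' : w.getLast? = some true := by
        rcases hok with h | h
        · exact absurd h (by simp)
        · cases w with
          | nil => exact absurd h (by simp)
          | cons c2 w2 => rwa [List.getLast?_cons_cons] at h
      have ha0 : coeff w 0 = 0 := coeff_zero w hw'
      refine tsum_congr fun n => ?_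
      rw [lintegral_const_mul _ (hm n)]
      rcases Nat.eq_zero_or_pos n with rfl | hn
      · show coeff w 0 * _ = Dop (coeff w) 0 * _
        simp [Dop, ha0]
      · rw [In0 u hu.1 n hn]
        show coeff w n * (ENNReal.ofReal u ^ n / (n:ℝ≥0∞)) = (coeff w n / n) * ENNReal.ofReal u ^ n
        simp only [div_eq_mul_inv]
        ring
    · calc (∑' n : ℕ, ∫⁻ t in Set.Ioo 0 u, coeff w n * (gfun true t * ENNReal.ofReal t ^ n))
          = ∑' n : ℕ, coeff w n * ∑' k : ℕ, ENNReal.ofReal u ^ (n+1+k) / ((n+1+k : ℕ) : ℝ≥0∞) := by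
            refine tsum_congr fun n => ?_
            rw [lintegral_const_mul _ (hm n), In1 u hu.1 hu.2 n]
        _ = ∑' n : ℕ, ∑' m : ℕ,
              (if n < m then coeff w n * (ENNReal.ofReal u ^ m / (m : ℝ≥0∞)) else 0) := by
            refine tsum_congr fun n => ?_
            rw [← ENNReal.tsum_mul_left]
            have hinj : Function.Injective (fun k : ℕ => n+1+k) := fun x y h => by
              simp only [Nat.add_right_cancel_iff] at h
              omega
            have hsupp : Function.support
                (fun m : ℕ => if n < m then coeff w n * (ENNReal.ofReal u ^ m / (m : ℝ≥0∞)) else 0)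
                ⊆ Set.range (fun k : ℕ => n+1+k) := by
              intro m hmem
              by_cases h : n < m
              · exact ⟨m - (n+1), by show n+1+(m-(n+1)) = m; omega⟩
              · simp [h] at hmem
            rw [← hinj.tsum_eq hsupp]
            refine tsum_congr fun k => ?_
            rw [if_pos (by omega)]
        _ = ∑' m : ℕ, ∑' n : ℕ,
              (if n < m then coeff w n * (ENNReal.ofReal u ^ m / (m : ℝ≥0∞)) else 0) :=
            ENNReal.tsum_comm
        _ = ∑' m : ℕ, Yop (coeff w) m * ENNReal.ofReal u ^ m := by
            refine tsum_congr fun m => ?_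
            rw [tsum_eq_sum (s := Finset.range m)
              (fun n hn => if_neg (fun hc => hn (Finset.mem_range.mpr hc)))]
            have hterm : ∀ n ∈ Finset.range m,
                (if n < m then coeff w n * (ENNReal.ofReal u ^ m / (m : ℝ≥0∞)) else 0)
                  = coeff w n * (ENNReal.ofReal u ^ m / (m : ℝ≥0∞)) :=
              fun n hn => if_pos (Finset.mem_range.mp hn)
            rw [Finset.sum_congr rfl hterm, ← Finset.sum_mul]
            show _ = ((∑ n ∈ Finset.range m, coeff w n) / m) * ENNReal.ofReal u ^ m
            simp only [div_eq_mul_inv]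
            ring

lemma w3_app : ∀ l, w3 l ++ [false, false, true] = w3 (l+1) := by
  intro l
  induction l with
  | zero => rfl
  | succ l ih =>
    show (false :: false :: true :: w3 l) ++ _ = false :: false :: true :: w3 (l+1)
    simp only [List.cons_append, ih]

lemma w21_app : ∀ l, w21 l ++ [false, true, true] = w21 (l+1) := by
  intro l
  induction l with
  | zero => rfl
  | succ l ih =>
    show (false :: true :: true :: w21 l) ++ _ = false :: true :: true :: w21 (l+1)
    simp only [List.cons_append, ih]

lemma w3_last (l : ℕ) : (w3 (l+1)).getLast? = some true := by
  rw [← w3_app, show ([false, false, true] : List Bool) = [false, false] ++ [true] from rfl,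
    ← List.append_assoc]
  exact List.getLast?_concat

lemma w21_last (l : ℕ) : (w21 (l+1)).getLast? = some true := by
  rw [← w21_app, show ([false, true, true] : List Bool) = [false, true] ++ [true] from rfl,
    ← List.append_assoc]
  exact List.getLast?_concat

lemma dual_w3 : ∀ l, dualWord (w3 l) = w21 l := by
  intro l
  induction l with
  | zero => rfl
  | succ l ih =>
    show dualWord (false :: false :: true :: w3 l) = w21 (l+1)
    rw [dualWord_cons, dualWord_cons, dualWord_cons, ih,
      List.append_assoc, List.append_assoc]
    rw [← w21_app l]
    rfl

lemma It_eq_sum3 (l : ℕ) : It (w3 (l+1)) 0 1 = Z3 (l+1) ⊤ := by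
  rw [It_eq (w3 (l+1)) (Or.inr (w3_last l)) 1 ⟨one_pos, le_refl 1⟩, ← sumA l]
  refine tsum_congr fun n => ?_
  simp

lemma It_eq_sum21 (l : ℕ) : It (w21 (l+1)) 0 1 = Z21 (l+1) ⊤ := by
  rw [It_eq (w21 (l+1)) (Or.inr (w21_last l)) 1 ⟨one_pos, le_refl 1⟩, ← sumB l]
  refine tsum_congr fun n => ?_
  simp

lemma Z_eq (l : ℕ) : Z3 (l+1) ⊤ = Z21 (l+1) ⊤ := by
  rw [← It_eq_sum3, ← It_eq_sum21]
  have := It_dual (w3 (l+1)) 1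
  rw [dual_w3] at this
  simpa using this











lemma tsum_coe_nnreal {α : Type*} (g : α → ℝ≥0) :
    ∑' a, (g a : ℝ) = (∑' a, ((g a : ℝ≥0∞))).toReal := by
  by_cases h : Summable g
  · rw [← ENNReal.coe_tsum h, ENNReal.coe_toReal]
    exact NNReal.coe_tsum.symm
  · have h1 : (∑' a, ((g a : ℝ≥0∞))) = ⊤ := by
      by_contra hne
      exact h (ENNReal.tsum_coe_ne_top_iff_summable.mp hne)
    rw [h1, ENNReal.toReal_top]
    exact tsum_eq_zero_of_not_summable (fun hs => h (NNReal.summable_coe.mp hs))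

def e3 (l : ℕ) : {f : Fin l → ℕ // StrictAnti f ∧ ∀ i, 1 ≤ f i} ≃ T3 l ⊤ where
  toFun f := ⟨f.1, f.2.1, f.2.2, fun i => ENNReal.natCast_lt_top _⟩
  invFun f := ⟨f.1, f.2.1, f.2.2.1⟩
  left_inv f := rfl
  right_inv f := rfl

def e21 (l : ℕ) : {p : (Fin l → ℕ) × (Fin l → ℕ) //
    (∀ i, p.2 i < p.1 i) ∧ (∀ i j, i < j → p.1 j < p.2 i) ∧ ∀ i, 1 ≤ p.2 i} ≃ T21 l ⊤ where
  toFun p := ⟨p.1, p.2.1, p.2.2.1, p.2.2.2, fun i => ENNReal.natCast_lt_top _⟩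
  invFun p := ⟨p.1, p.2.1, p.2.2.1, p.2.2.2.1⟩
  left_inv p := rfl
  right_inv p := rfl

lemma zeta3_bridge (l : ℕ) : zetaThreeRep l = (Z3 l ⊤).toReal := by
  show (∑' f : {f : Fin l → ℕ // StrictAnti f ∧ ∀ i, 1 ≤ f i},
      ∏ i : Fin l, (1 : ℝ) / (f.1 i : ℝ) ^ 3) = _
  calc (∑' f : {f : Fin l → ℕ // StrictAnti f ∧ ∀ i, 1 ≤ f i},
        ∏ i : Fin l, (1 : ℝ) / (f.1 i : ℝ) ^ 3)
      = ∑' f : {f : Fin l → ℕ // StrictAnti f ∧ ∀ i, 1 ≤ f i},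
          (((∏ i, ((f.1 i : ℝ≥0))⁻¹ ^ 3) : ℝ≥0) : ℝ) := by
        refine tsum_congr fun f => ?_
        push_cast
        refine Finset.prod_congr rfl fun i _ => ?_
        simp [one_div, inv_pow]
    _ = (∑' f : {f : Fin l → ℕ // StrictAnti f ∧ ∀ i, 1 ≤ f i},
          (((∏ i, ((f.1 i : ℝ≥0))⁻¹ ^ 3) : ℝ≥0) : ℝ≥0∞)).toReal := tsum_coe_nnreal _
    _ = (Z3 l ⊤).toReal := by
        congr 1
        rw [Z3, ← Equiv.tsum_eq (e3 l) (fun f : T3 l ⊤ => ∏ i, ((f.1 i : ℝ≥0∞))⁻¹ ^ 3)]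
        refine tsum_congr fun f => ?_
        have hf1 : (((e3 l) f).1 : Fin l → ℕ) = f.1 := rfl
        rw [ENNReal.coe_finset_prod, hf1]
        refine Finset.prod_congr rfl fun i _ => ?_
        have hne : ((f.1 i : ℝ≥0)) ≠ 0 := Nat.cast_ne_zero.mpr (by have := f.2.2 i; omega)
        rw [ENNReal.coe_pow, ENNReal.coe_inv hne, ENNReal.coe_natCast]

lemma zeta21_bridge (l : ℕ) : zetaTwoOneRep l = (Z21 l ⊤).toReal := by
  show (∑' p : {p : (Fin l → ℕ) × (Fin l → ℕ) //
      (∀ i, p.2 i < p.1 i) ∧ (∀ i j, i < j → p.1 j < p.2 i) ∧ ∀ i, 1 ≤ p.2 i},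
        ∏ i : Fin l, (1 : ℝ) / ((p.1.1 i : ℝ) ^ 2 * (p.1.2 i : ℝ))) = _
  calc (∑' p : {p : (Fin l → ℕ) × (Fin l → ℕ) //
      (∀ i, p.2 i < p.1 i) ∧ (∀ i j, i < j → p.1 j < p.2 i) ∧ ∀ i, 1 ≤ p.2 i},
        ∏ i : Fin l, (1 : ℝ) / ((p.1.1 i : ℝ) ^ 2 * (p.1.2 i : ℝ)))
      = ∑' p : {p : (Fin l → ℕ) × (Fin l → ℕ) //
      (∀ i, p.2 i < p.1 i) ∧ (∀ i j, i < j → p.1 j < p.2 i) ∧ ∀ i, 1 ≤ p.2 i},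
          (((∏ i, (((p.1.1 i : ℝ≥0)) ^ 2 * (p.1.2 i : ℝ≥0))⁻¹) : ℝ≥0) : ℝ) := by
        refine tsum_congr fun p => ?_
        push_cast
        refine Finset.prod_congr rfl fun i _ => ?_
        simp [one_div]
    _ = (∑' p : {p : (Fin l → ℕ) × (Fin l → ℕ) //
      (∀ i, p.2 i < p.1 i) ∧ (∀ i j, i < j → p.1 j < p.2 i) ∧ ∀ i, 1 ≤ p.2 i},
          (((∏ i, (((p.1.1 i : ℝ≥0)) ^ 2 * (p.1.2 i : ℝ≥0))⁻¹) : ℝ≥0) : ℝ≥0∞)).toReal :=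
        tsum_coe_nnreal _
    _ = (Z21 l ⊤).toReal := by
        congr 1
        rw [Z21, ← Equiv.tsum_eq (e21 l)
          (fun p : T21 l ⊤ => ∏ i, (((p.1.1 i : ℝ≥0∞)) ^ 2 * (p.1.2 i : ℝ≥0∞))⁻¹)]
        refine tsum_congr fun p => ?_
        have hf1 : (((e21 l) p).1 : (Fin l → ℕ) × (Fin l → ℕ)) = p.1 := rfl
        rw [ENNReal.coe_finset_prod, hf1]
        refine Finset.prod_congr rfl fun i _ => ?_
        have h2 : 1 ≤ p.1.2 i := p.2.2.2 i
        have h1 : 1 ≤ p.1.1 i := le_trans h2 (le_of_lt (p.2.1 i))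
        have hne : (((p.1.1 i : ℝ≥0)) ^ 2 * (p.1.2 i : ℝ≥0)) ≠ 0 := by
          refine mul_ne_zero (pow_ne_zero _ ?_) ?_ <;>
            exact Nat.cast_ne_zero.mpr (by omega)
        rw [ENNReal.coe_inv hne, ENNReal.coe_mul, ENNReal.coe_pow, ENNReal.coe_natCast,
          ENNReal.coe_natCast]


end ZD

theorem zetaTwoOneRep_eq_zetaThreeRep (l : ℕ) (hl : 1 ≤ l) :
    zetaTwoOneRep l = zetaThreeRep l := by
  obtain ⟨l', rfl⟩ : ∃ l', l = l' + 1 := ⟨l - 1, by omega⟩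
  rw [ZD.zeta21_bridge, ZD.zeta3_bridge, ZD.Z_eq]
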